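/- For every integer n ≥ 1, every 0 < α < 1, and every measurable set E ⊆ ℝⁿ, |{x ∈ ℝⁿ : M₁⋯M_n χ_E(x) > α}| ≤ (1 + 4·(1−α)^{1/n}/(1 − (1−α)^{1/n}))^n · |E|. -/

import Mathlib

open MeasureTheory Set Filter
open scoped ENNReal

/-- The directional maximal operator `M_j` on `ℝⁿ`, averaging over segments
in the `j`-th coordinate direction. -/
noncomputable def dirMax {n : ℕ} (j : Fin n) (f : (Fin n → ℝ) → ℝ≥0∞)
    (x : Fin n → ℝ) : ℝ≥0∞ :=
  ⨆ (s : ℝ) (t : ℝ) (_ : s < x j) (_ : x j < t),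
    (∫⁻ u in Set.Ioo s t, f (Function.update x j u)) / ENNReal.ofReal (t - s)

/-- The iterated maximal operator `M₁ M₂ ⋯ M_n`. -/
noncomputable def iterMax (n : ℕ) (f : (Fin n → ℝ) → ℝ≥0∞) : (Fin n → ℝ) → ℝ≥0∞ :=
  (List.finRange n).foldr (fun j g => dirMax j g) f

lemma risingSun_aux (F : ℝ → ℝ) (hF : Continuous F) {y b : ℝ} (hyb : y < b)
    (hsub : ∀ z ∈ Ico y b, ∃ t, z < t ∧ F z < F t)
    (hb : ∀ t, b < t → F t ≤ F b) : F y ≤ F b := by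
  obtain ⟨m, hmI, hm⟩ := isCompact_Icc.exists_isMaxOn (s := Icc y b)
    ⟨y, le_refl y, hyb.le⟩ hF.continuousOn
  have hFy : F y ≤ F m := hm ⟨le_refl y, hyb.le⟩
  by_cases hmb : F m ≤ F b
  · exact hFy.trans hmb
  push_neg at hmb
  exfalso
  have hmb' : m ≠ b := fun h => (h ▸ hmb).false
  obtain ⟨t, hmt, hFt⟩ := hsub m ⟨hmI.1, lt_of_le_of_ne hmI.2 hmb'⟩
  rcases le_or_gt t b with h | h
  · exact absurd (hm ⟨hmI.1.trans hmt.le, h⟩) (not_le.mpr hFt)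
  · exact absurd ((hb t h).trans hmb.le) (not_le.mpr hFt)

/-- One-sided rising sun estimate. -/
lemma oneSided (A : Set ℝ) (hA : MeasurableSet A) (hfin : volume A ≠ ∞)
    {γ : ℝ} (hγ0 : 0 < γ) (hγ1 : γ < 1) :
    volume ({x : ℝ | ∃ t, x < t ∧
        ENNReal.ofReal γ * ENNReal.ofReal (t - x) < volume (A ∩ Ioo x t)} \ A)
      ≤ ENNReal.ofReal ((1 - γ) / γ) * volume A := by
  set f : ℝ → ℝ := A.indicator fun _ => (1 : ℝ) with hfdef
  have hf : Integrable f := by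
    rw [hfdef, integrable_indicator_iff hA]
    exact integrableOn_const hfin (by simp)
  set F : ℝ → ℝ := fun x => (∫ t in (0:ℝ)..x, f t) - γ * x with hFdef
  have hFc : Continuous F := (hf.continuous_primitive 0).sub (continuous_const.mul continuous_id)
  -- key identity
  have hkey : ∀ x t : ℝ, x ≤ t →
      F t - F x = (volume (A ∩ Ioc x t)).toReal - γ * (t - x) := by
    intro x t hxt
    have h1 : (∫ u in (0:ℝ)..x, f u) + ∫ u in x..t, f u = ∫ u in (0:ℝ)..t, f u :=
      intervalIntegral.integral_add_adjacent_intervals hf.intervalIntegrable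
        hf.intervalIntegrable
    have h2 : (∫ u in x..t, f u) = (volume (A ∩ Ioc x t)).toReal := by
      rw [intervalIntegral.integral_of_le hxt, hfdef,
        setIntegral_indicator hA, setIntegral_const, inter_comm]
      simp
      rfl
    simp only [hFdef]
    rw [← h1, h2]; ring
  -- the open "rising sun" set
  set V : Set ℝ := {x | ∃ t, x < t ∧ F x < F t} with hVdef
  have hVopen : IsOpen V := by
    have : V = ⋃ t : ℝ, (Iio t ∩ F ⁻¹' (Iio (F t))) := by
      ext x; simp [hVdef, and_comm]
    rw [this]
    exact isOpen_iUnion fun t => (isOpen_Iio).inter (isOpen_Iio.preimage hFc)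
  -- U ⊆ V
  have hUV : {x : ℝ | ∃ t, x < t ∧
      ENNReal.ofReal γ * ENNReal.ofReal (t - x) < volume (A ∩ Ioo x t)} ⊆ V := by
    rintro x ⟨t, hxt, hlt⟩
    refine ⟨t, hxt, ?_⟩
    have hIoc : volume (A ∩ Ioc x t) ≠ ∞ :=
      (lt_of_le_of_lt (measure_mono inter_subset_left) hfin.lt_top).ne
    have hlt2 : ENNReal.ofReal (γ * (t - x)) < volume (A ∩ Ioc x t) := by
      rw [ENNReal.ofReal_mul hγ0.le]
      exact hlt.trans_le (measure_mono (inter_subset_inter_right _ Ioo_subset_Ioc_self))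
    have := (ENNReal.ofReal_lt_iff_lt_toReal
      (mul_nonneg hγ0.le (by linarith)) hIoc).mp hlt2
    have hd : 0 < F t - F x := by rw [hkey x t hxt.le]; linarith
    linarith
  -- bounds on F
  have hFub : ∀ z : ℝ, F z ≤ (volume A).toReal - γ * z := by
    intro z
    have : (∫ u in (0:ℝ)..z, f u) ≤ (volume A).toReal := by
      rcases le_or_gt 0 z with h | h
      · rw [intervalIntegral.integral_of_le h, hfdef, setIntegral_indicator hA,
          setIntegral_const]
        simp only [smul_eq_mul, mul_one]
        exact ENNReal.toReal_mono hfin (measure_mono inter_subset_right)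
      · rw [intervalIntegral.integral_of_ge h.le, hfdef, setIntegral_indicator hA,
          setIntegral_const]
        simp only [smul_eq_mul, mul_one, measureReal_def]
        have : (0:ℝ) ≤ (volume (Ioc z 0 ∩ A)).toReal := ENNReal.toReal_nonneg
        have h2 : (0:ℝ) ≤ (volume A).toReal := ENNReal.toReal_nonneg
        linarith
    simp only [hFdef]; linarith
  have hFlb : ∀ z : ℝ, -(volume A).toReal - γ * z ≤ F z := by
    intro z
    have : -(volume A).toReal ≤ (∫ u in (0:ℝ)..z, f u) := by
      rcases le_or_gt 0 z with h | h
      · rw [intervalIntegral.integral_of_le h, hfdef, setIntegral_indicator hA,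
          setIntegral_const]
        simp only [smul_eq_mul, mul_one, measureReal_def]
        have : (0:ℝ) ≤ (volume (Ioc 0 z ∩ A)).toReal := ENNReal.toReal_nonneg
        have h2 : (0:ℝ) ≤ (volume A).toReal := ENNReal.toReal_nonneg
        linarith
      · rw [intervalIntegral.integral_of_ge h.le, hfdef, setIntegral_indicator hA,
          setIntegral_const]
        simp only [smul_eq_mul, mul_one, measureReal_def]
        have := ENNReal.toReal_mono hfin (measure_mono (inter_subset_right
          (s := Ioc z 0) (t := A)))
        linarith
    simp only [hFdef]; linarith
  -- every ray to the right leaves V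
  have hnot_above : ∀ x : ℝ, ∃ z, x ≤ z ∧ z ∉ V := by
    intro x
    by_contra h
    push_neg at h
    set M := (volume A).toReal with hM
    have hM0 : 0 ≤ M := ENNReal.toReal_nonneg
    set T := x + (2 * M + 1) / γ with hT
    have hxT : x < T := by
      have : 0 < (2 * M + 1) / γ := by positivity
      simp only [hT]; linarith
    obtain ⟨m, hmI, hm⟩ := isCompact_Icc.exists_isMaxOn (s := Icc x T)
      ⟨x, le_refl x, hxT.le⟩ hFc.continuousOn
    obtain ⟨t, hmt, hFt⟩ := h m hmI.1
    rcases le_or_gt t T with hc | hc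
    · exact absurd (hm ⟨hmI.1.trans hmt.le, hc⟩) (not_le.mpr hFt)
    · have h1 : F t ≤ M - γ * t := hFub t
      have h2 : -M - γ * x ≤ F x := hFlb x
      have h3 : F x ≤ F m := hm ⟨le_refl x, hxT.le⟩
      have h4 : γ * T < γ * t := (mul_lt_mul_iff_right₀ hγ0).mpr hc
      have h5 : γ * T = γ * x + 2 * M + 1 := by
        simp only [hT]; field_simp; ring
      nlinarith
  set bb : ℝ → ℝ := fun x => sInf {z | x ≤ z ∧ z ∉ V} with hbb
  have hbbP : ∀ x ∈ V, x < bb x ∧ bb x ∉ V ∧ Ico x (bb x) ⊆ V := by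
    intro x hx
    have hne : {z | x ≤ z ∧ z ∉ V}.Nonempty := hnot_above x
    have hcl : IsClosed {z | x ≤ z ∧ z ∉ V} := by
      have : {z | x ≤ z ∧ z ∉ V} = Ici x ∩ Vᶜ := rfl
      rw [this]; exact isClosed_Ici.inter hVopen.isClosed_compl
    have hbd : BddBelow {z | x ≤ z ∧ z ∉ V} := ⟨x, fun z hz => hz.1⟩
    have hmem := hcl.csInf_mem hne hbd
    refine ⟨lt_of_le_of_ne hmem.1 ?_, hmem.2, ?_⟩
    · intro h
      apply hmem.2
      show bb x ∈ V
      rw [← h]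
      exact hx
    intro z hz
    by_contra hcon
    exact absurd (csInf_le hbd ⟨hz.1, hcon⟩) (not_le.mpr hz.2)
  have hnot_below : ∀ x ∈ V, ∃ z, z ≤ x ∧ z ∉ V := by
    intro x hx
    by_contra h
    push_neg at h
    obtain ⟨hlt, hbnV, hIco⟩ := hbbP x hx
    have hmono : ∀ y, y < bb x → F y ≤ F (bb x) := by
      intro y hy
      refine risingSun_aux F hFc hy (fun z hz => ?_) (fun t ht => ?_)
      · rcases le_or_gt z x with hc | hc
        · exact h z hc
        · exact hIco ⟨hc.le, hz.2⟩
      · by_contra hcon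
        push_neg at hcon
        exact hbnV ⟨t, ht, hcon⟩
    set M := (volume A).toReal with hM
    set y := min x (-(M + F (bb x) + 1) / γ) with hy
    have h1 : F y ≤ F (bb x) := hmono y (lt_of_le_of_lt (min_le_left _ _) hlt)
    have h2 : -M - γ * y ≤ F y := hFlb y
    have h5 : γ * y ≤ -(M + F (bb x) + 1) := by
      calc γ * y ≤ γ * (-(M + F (bb x) + 1) / γ) :=
            (mul_le_mul_iff_right₀ hγ0).mpr (min_le_right _ _)
        _ = -(M + F (bb x) + 1) := by field_simp
    linarith [h1, h2, h5]
  set aa : ℝ → ℝ := fun x => sSup {z | z ≤ x ∧ z ∉ V} with haa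
  have haaP : ∀ x ∈ V, aa x < x ∧ aa x ∉ V ∧ Ioc (aa x) x ⊆ V := by
    intro x hx
    have hne : {z | z ≤ x ∧ z ∉ V}.Nonempty := hnot_below x hx
    have hcl : IsClosed {z | z ≤ x ∧ z ∉ V} := by
      have : {z | z ≤ x ∧ z ∉ V} = Iic x ∩ Vᶜ := rfl
      rw [this]; exact isClosed_Iic.inter hVopen.isClosed_compl
    have hbd : BddAbove {z | z ≤ x ∧ z ∉ V} := ⟨x, fun z hz => hz.1⟩
    have hmem := hcl.csSup_mem hne hbd
    refine ⟨lt_of_le_of_ne hmem.1 ?_, hmem.2, ?_⟩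
    · intro h
      apply hmem.2
      show aa x ∈ V
      rw [h]
      exact hx
    intro z hz
    by_contra hcon
    exact absurd (le_csSup hbd ⟨hz.2, hcon⟩) (not_le.mpr hz.1)
  have hIooV : ∀ x ∈ V, Ioo (aa x) (bb x) ⊆ V := by
    intro x hx z hz
    rcases le_or_gt z x with hc | hc
    · exact (haaP x hx).2.2 ⟨hz.1, hc⟩
    · exact (hbbP x hx).2.2 ⟨hc.le, hz.2⟩
  have hmono2 : ∀ x ∈ V, ∀ y ∈ Ioo (aa x) (bb x), F y ≤ F (bb x) := by
    intro x hx y hy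
    refine risingSun_aux F hFc hy.2 (fun z hz => ?_) (fun t ht => ?_)
    · exact hIooV x hx ⟨lt_of_lt_of_le hy.1 hz.1, hz.2⟩
    · by_contra hcon
      push_neg at hcon
      exact (hbbP x hx).2.1 ⟨t, ht, hcon⟩
  have hFab : ∀ x ∈ V, F (aa x) ≤ F (bb x) := by
    intro x hx
    have hab : aa x < bb x := (haaP x hx).1.trans (hbbP x hx).1
    have htd : Tendsto F (nhdsWithin (aa x) (Ioi (aa x))) (nhds (F (aa x))) :=
      (hFc.tendsto (aa x)).mono_left nhdsWithin_le_nhds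
    refine le_of_tendsto htd ?_
    filter_upwards [Ioo_mem_nhdsGT hab] with y hy
    exact hmono2 x hx y hy
  have hdens : ∀ x ∈ V,
      ENNReal.ofReal (γ * (bb x - aa x)) ≤ volume (A ∩ Ioo (aa x) (bb x)) := by
    intro x hx
    have hab : aa x < bb x := (haaP x hx).1.trans (hbbP x hx).1
    have h1 := hkey (aa x) (bb x) hab.le
    have h2 : F (aa x) ≤ F (bb x) := hFab x hx
    have h3 : γ * (bb x - aa x) ≤ (volume (A ∩ Ioc (aa x) (bb x))).toReal := by linarith
    have h4 : volume (A ∩ Ioc (aa x) (bb x)) ≤ volume (A ∩ Ioo (aa x) (bb x)) := by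
      have hsub2 : A ∩ Ioc (aa x) (bb x) ⊆ (A ∩ Ioo (aa x) (bb x)) ∪ {bb x} := by
        rintro u ⟨huA, hu1, hu2⟩
        rcases lt_or_eq_of_le hu2 with h | h
        · exact Or.inl ⟨huA, hu1, h⟩
        · exact Or.inr (by simp [h])
      calc volume (A ∩ Ioc (aa x) (bb x))
          ≤ volume ((A ∩ Ioo (aa x) (bb x)) ∪ {bb x}) := measure_mono hsub2
        _ ≤ volume (A ∩ Ioo (aa x) (bb x)) + volume ({bb x} : Set ℝ) := measure_union_le _ _
        _ = volume (A ∩ Ioo (aa x) (bb x)) := by simp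
    exact le_trans (ENNReal.ofReal_le_of_le_toReal h3) h4
  have hcomp : ∀ x ∈ V, volume (Ioo (aa x) (bb x) \ A)
      ≤ ENNReal.ofReal ((1 - γ) / γ) * volume (A ∩ Ioo (aa x) (bb x)) := by
    intro x hx
    have hab : aa x < bb x := (haaP x hx).1.trans (hbbP x hx).1
    have habn : (0:ℝ) ≤ bb x - aa x := by linarith
    set I := Ioo (aa x) (bb x) with hI
    have htot : volume (I ∩ A) + volume (I \ A) = volume I := measure_inter_add_diff I hA
    have hIvol : volume I = ENNReal.ofReal (bb x - aa x) := Real.volume_Ioo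
    have hIA : volume (I ∩ A) ≠ ∞ :=
      (lt_of_le_of_lt (measure_mono inter_subset_right) hfin.lt_top).ne
    have hsub' : volume (I \ A) = volume I - volume (I ∩ A) :=
      ENNReal.eq_sub_of_add_eq hIA (by rw [add_comm]; exact htot)
    have hICA : A ∩ I = I ∩ A := inter_comm _ _
    have hstep : volume (I \ A) ≤ ENNReal.ofReal ((1 - γ) * (bb x - aa x)) := by
      rw [hsub', hIvol]
      calc ENNReal.ofReal (bb x - aa x) - volume (I ∩ A)
          ≤ ENNReal.ofReal (bb x - aa x) - ENNReal.ofReal (γ * (bb x - aa x)) := by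
            apply tsub_le_tsub_left
            rw [← hICA]
            exact hdens x hx
        _ = ENNReal.ofReal ((bb x - aa x) - γ * (bb x - aa x)) :=
            (ENNReal.ofReal_sub _ (mul_nonneg hγ0.le habn)).symm
        _ ≤ ENNReal.ofReal ((1 - γ) * (bb x - aa x)) :=
            ENNReal.ofReal_le_ofReal (le_of_eq (by ring))
    refine hstep.trans ?_
    have heq : ENNReal.ofReal ((1 - γ) * (bb x - aa x))
        = ENNReal.ofReal ((1 - γ) / γ) * ENNReal.ofReal (γ * (bb x - aa x)) := by
      rw [← ENNReal.ofReal_mul (div_nonneg (by linarith) hγ0.le)]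
      congr 1
      field_simp
    rw [heq]
    exact mul_le_mul_right (hdens x hx) _
  have hsame : ∀ x ∈ V, ∀ z ∈ Ioo (aa x) (bb x), aa z = aa x ∧ bb z = bb x := by
    intro x hx z hz
    constructor
    · apply le_antisymm
      · refine csSup_le ⟨aa x, hz.1.le, (haaP x hx).2.1⟩ fun w hw => ?_
        by_contra hcon
        push_neg at hcon
        exact hw.2 (hIooV x hx ⟨hcon, lt_of_le_of_lt hw.1 hz.2⟩)
      · exact le_csSup ⟨z, fun w hw => hw.1⟩ ⟨hz.1.le, (haaP x hx).2.1⟩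
    · apply le_antisymm
      · exact csInf_le ⟨z, fun w hw => hw.1⟩ ⟨hz.2.le, (hbbP x hx).2.1⟩
      · refine le_csInf (hnot_above z) fun w hw => ?_
        by_contra hcon
        push_neg at hcon
        exact hw.2 (hIooV x hx ⟨lt_of_lt_of_le hz.1 hw.1, hcon⟩)
  set C : Set (Set ℝ) := (fun q : ℚ => Ioo (aa (q:ℝ)) (bb (q:ℝ))) '' {q : ℚ | (q : ℝ) ∈ V}
    with hC
  have hCc : C.Countable := (Set.to_countable _).image _
  haveI := hCc.to_subtype
  have hcover : {x : ℝ | ∃ t, x < t ∧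
      ENNReal.ofReal γ * ENNReal.ofReal (t - x) < volume (A ∩ Ioo x t)} \ A
      ⊆ ⋃ S : C, ((S : Set ℝ) \ A) := by
    rintro x ⟨hxU, hxA⟩
    have hxV : x ∈ V := hUV hxU
    have hal : aa x < x := (haaP x hxV).1
    have hbl : x < bb x := (hbbP x hxV).1
    obtain ⟨q, hq1, hq2⟩ := exists_rat_btwn hal
    have hqmem : (q:ℝ) ∈ Ioo (aa x) (bb x) := ⟨hq1, hq2.trans hbl⟩
    have hqV : (q:ℝ) ∈ V := hIooV x hxV hqmem
    obtain ⟨e1, e2⟩ := hsame x hxV q hqmem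
    refine mem_iUnion.mpr ⟨⟨Ioo (aa (q:ℝ)) (bb (q:ℝ)), ⟨q, hqV, rfl⟩⟩, ⟨?_, hxA⟩⟩
    show x ∈ Ioo (aa (q:ℝ)) (bb (q:ℝ))
    rw [e1, e2]
    exact ⟨hal, hbl⟩
  have hdisj : ∀ S T : Set ℝ, S ∈ C → T ∈ C → S ≠ T → Disjoint S T := by
    rintro S T ⟨q, hq, rfl⟩ ⟨r, hr, rfl⟩ hne
    rw [Set.disjoint_left]
    intro z hzq hzr
    obtain ⟨e1, e2⟩ := hsame (q:ℝ) hq z hzq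
    obtain ⟨f1, f2⟩ := hsame (r:ℝ) hr z hzr
    apply hne
    show Ioo (aa (q:ℝ)) (bb (q:ℝ)) = Ioo (aa (r:ℝ)) (bb (r:ℝ))
    rw [← e1, ← e2, f1, f2]
  have hmeas : ∀ S : C, MeasurableSet (A ∩ (S : Set ℝ)) := by
    rintro ⟨S, q, hq, rfl⟩
    exact hA.inter measurableSet_Ioo
  calc volume ({x : ℝ | ∃ t, x < t ∧
        ENNReal.ofReal γ * ENNReal.ofReal (t - x) < volume (A ∩ Ioo x t)} \ A)
      ≤ volume (⋃ S : C, ((S : Set ℝ) \ A)) := measure_mono hcover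
    _ ≤ ∑' S : C, volume ((S : Set ℝ) \ A) := measure_iUnion_le _
    _ ≤ ∑' S : C, ENNReal.ofReal ((1 - γ) / γ) * volume (A ∩ (S : Set ℝ)) := by
        apply ENNReal.tsum_le_tsum
        rintro ⟨S, q, hq, rfl⟩
        exact hcomp (q:ℝ) hq
    _ = ENNReal.ofReal ((1 - γ) / γ) * ∑' S : C, volume (A ∩ (S : Set ℝ)) :=
        ENNReal.tsum_mul_left
    _ = ENNReal.ofReal ((1 - γ) / γ) * volume (⋃ S : C, A ∩ (S : Set ℝ)) := by
        congr 1
        refine (measure_iUnion ?_ hmeas).symm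
        intro S T hST
        exact ((hdisj S T S.2 T.2 (fun h => hST (Subtype.ext h))).mono
          inter_subset_right inter_subset_right)
    _ ≤ ENNReal.ofReal ((1 - γ) / γ) * volume A := by
        apply mul_le_mul_right
        apply measure_mono
        exact iUnion_subset fun S => inter_subset_left

/-- The 1D Solyanik-type estimate. -/
lemma oneDim (A : Set ℝ) (hA : MeasurableSet A) {β : ℝ} (hβ0 : 0 < β) (hβ1 : β < 1) :
    volume {x : ℝ | ENNReal.ofReal (1 - β) <
        ⨆ (s : ℝ) (t : ℝ) (_ : s < x) (_ : x < t),
          volume (A ∩ Ioo s t) / ENNReal.ofReal (t - s)}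
      ≤ ENNReal.ofReal ((1 + 3 * β) / (1 - β)) * volume A := by
  set γ : ℝ := 1 - β with hγdef
  have hγ0 : 0 < γ := by simp only [hγdef]; linarith
  have hγ1 : γ < 1 := by simp only [hγdef]; linarith
  have hcpos : 0 < (1 + 3 * β) / (1 - β) := div_pos (by linarith) (by linarith)
  rcases eq_or_ne (volume A) ∞ with hfin | hfin
  · rw [hfin, ENNReal.mul_top (ENNReal.ofReal_pos.mpr hcpos).ne']
    exact le_top
  -- one-sided sets
  set Up : Set ℝ → Set ℝ := fun B => {x : ℝ | ∃ t, x < t ∧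
      ENNReal.ofReal γ * ENNReal.ofReal (t - x) < volume (B ∩ Ioo x t)} with hUp
  set Um : Set ℝ := {x : ℝ | ∃ s, s < x ∧
      ENNReal.ofReal γ * ENNReal.ofReal (x - s) < volume (A ∩ Ioo s x)} with hUm
  have hincl : {x : ℝ | ENNReal.ofReal (1 - β) <
      ⨆ (s : ℝ) (t : ℝ) (_ : s < x) (_ : x < t),
        volume (A ∩ Ioo s t) / ENNReal.ofReal (t - s)}
      ⊆ A ∪ ((Up A \ A) ∪ (Um \ A)) := by
    intro x hx
    by_cases hxA : x ∈ A
    · exact Or.inl hxA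
    refine Or.inr ?_
    simp only [mem_setOf_eq, lt_iSup_iff] at hx
    obtain ⟨s, t, hsx, hxt, hval⟩ := hx
    have hts : (0:ℝ) < t - s := by linarith
    have hmul : ENNReal.ofReal γ * ENNReal.ofReal (t - s) < volume (A ∩ Ioo s t) := by
      rw [← hγdef] at hval
      exact (ENNReal.lt_div_iff_mul_lt (Or.inl (by simp only [ne_eq, ENNReal.ofReal_eq_zero, not_le]; linarith))
        (Or.inl ENNReal.ofReal_ne_top)).mp hval
    have hsplit : volume (A ∩ Ioo s t) ≤ volume (A ∩ Ioo s x) + volume (A ∩ Ioo x t) := by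
      have : A ∩ Ioo s t ⊆ (A ∩ Ioo s x) ∪ (A ∩ Ioo x t) := by
        rintro u ⟨huA, hu1, hu2⟩
        rcases lt_trichotomy u x with h | h | h
        · exact Or.inl ⟨huA, hu1, h⟩
        · exact absurd (h ▸ huA) hxA
        · exact Or.inr ⟨huA, h, hu2⟩
      exact le_trans (measure_mono this) (measure_union_le _ _)
    have hadd : ENNReal.ofReal γ * ENNReal.ofReal (t - s)
        = ENNReal.ofReal γ * ENNReal.ofReal (x - s)
          + ENNReal.ofReal γ * ENNReal.ofReal (t - x) := by
      rw [← mul_add, ← ENNReal.ofReal_add (by linarith) (by linarith)]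
      norm_num
    by_contra hcon
    simp only [mem_union, mem_diff, hxA, and_true, not_or, not_false_iff] at hcon
    obtain ⟨h1, h2⟩ := hcon
    simp only [hUp, hUm, mem_setOf_eq, not_exists, not_and, not_lt] at h1 h2
    have b1 : volume (A ∩ Ioo x t) ≤ ENNReal.ofReal γ * ENNReal.ofReal (t - x) := h1 t hxt
    have b2 : volume (A ∩ Ioo s x) ≤ ENNReal.ofReal γ * ENNReal.ofReal (x - s) := h2 s hsx
    have := hsplit.trans (add_le_add b2 b1)
    rw [← hadd] at this
    exact absurd (hmul.trans_le this) (lt_irrefl _)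
  -- reflection for Um
  have hUmRef : Um \ A = Neg.neg ⁻¹' (Up (Neg.neg ⁻¹' A) \ (Neg.neg ⁻¹' A)) := by
    have hU : Um = Neg.neg ⁻¹' (Up (Neg.neg ⁻¹' A)) := by
      ext x
      simp only [hUm, hUp, mem_setOf_eq, mem_preimage]
      constructor
      · rintro ⟨s, hsx, h⟩
        refine ⟨-s, by linarith, ?_⟩
        have : Neg.neg ⁻¹' A ∩ Ioo (-x) (-s) = Neg.neg ⁻¹' (A ∩ Ioo s x) := by
          ext u
          simp only [mem_inter_iff, mem_preimage, mem_Ioo]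
          constructor
          · rintro ⟨h1, h2, h3⟩; exact ⟨h1, by linarith, by linarith⟩
          · rintro ⟨h1, h2, h3⟩; exact ⟨h1, by linarith, by linarith⟩
        rw [this, (Measure.measurePreserving_neg (volume : Measure ℝ)).measure_preimage
          ((hA.inter measurableSet_Ioo).nullMeasurableSet)]
        have he : -s - -x = x - s := by ring
        rw [he]
        exact h
      · rintro ⟨t, hxt, h⟩
        refine ⟨-t, by linarith, ?_⟩
        have : Neg.neg ⁻¹' A ∩ Ioo (-x) t = Neg.neg ⁻¹' (A ∩ Ioo (-t) x) := by
          ext u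
          simp only [mem_inter_iff, mem_preimage, mem_Ioo]
          constructor
          · rintro ⟨h1, h2, h3⟩; exact ⟨h1, by linarith, by linarith⟩
          · rintro ⟨h1, h2, h3⟩; exact ⟨h1, by linarith, by linarith⟩
        rw [this, (Measure.measurePreserving_neg (volume : Measure ℝ)).measure_preimage
          ((hA.inter measurableSet_Ioo).nullMeasurableSet)] at h
        have he : x - -t = t - -x := by ring
        rw [he]
        exact h
    rw [hU, preimage_diff]
    congr 1
    ext x
    simp [neg_neg]
  have hNm : MeasurableSet (Neg.neg ⁻¹' A) := hA.preimage measurable_neg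
  have hNv : volume (Neg.neg ⁻¹' A) = volume A :=
    (Measure.measurePreserving_neg (volume : Measure ℝ)).measure_preimage
      hA.nullMeasurableSet
  have hUmB : volume (Um \ A) ≤ ENNReal.ofReal ((1 - γ) / γ) * volume A := by
    have hpre := MeasurePreserving.measure_preimage_equiv
      (f := (MeasurableEquiv.neg ℝ)) (Measure.measurePreserving_neg (volume : Measure ℝ))
      (Up (Neg.neg ⁻¹' A) \ (Neg.neg ⁻¹' A))
    rw [hUmRef]
    have hco : Neg.neg ⁻¹' (Up (Neg.neg ⁻¹' A) \ Neg.neg ⁻¹' A)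
        = (MeasurableEquiv.neg ℝ) ⁻¹' (Up (Neg.neg ⁻¹' A) \ Neg.neg ⁻¹' A) := rfl
    rw [hco, hpre, ← hNv]
    exact oneSided _ hNm (hNv ▸ hfin) hγ0 hγ1
  have hUpB : volume (Up A \ A) ≤ ENNReal.ofReal ((1 - γ) / γ) * volume A :=
    oneSided A hA hfin hγ0 hγ1
  calc volume {x : ℝ | ENNReal.ofReal (1 - β) <
        ⨆ (s : ℝ) (t : ℝ) (_ : s < x) (_ : x < t),
          volume (A ∩ Ioo s t) / ENNReal.ofReal (t - s)}
      ≤ volume (A ∪ ((Up A \ A) ∪ (Um \ A))) := measure_mono hincl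
    _ ≤ volume A + volume ((Up A \ A) ∪ (Um \ A)) := measure_union_le _ _
    _ ≤ volume A + (volume (Up A \ A) + volume (Um \ A)) :=
        add_le_add_right (measure_union_le _ _) _
    _ ≤ volume A + (ENNReal.ofReal ((1 - γ) / γ) * volume A
          + ENNReal.ofReal ((1 - γ) / γ) * volume A) :=
        add_le_add_right (add_le_add hUpB hUmB) _
    _ = (1 + (ENNReal.ofReal ((1 - γ) / γ) + ENNReal.ofReal ((1 - γ) / γ))) * volume A := by
        ring
    _ ≤ ENNReal.ofReal ((1 + 3 * β) / (1 - β)) * volume A := by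
        apply mul_le_mul_left
        have hknn : (0:ℝ) ≤ (1 - γ) / γ := div_nonneg (by linarith) hγ0.le
        rw [← ENNReal.ofReal_one, ← ENNReal.ofReal_add hknn hknn,
          ← ENNReal.ofReal_add (by norm_num) (add_nonneg hknn hknn)]
        apply ENNReal.ofReal_le_ofReal
        have h1β : (0:ℝ) < 1 - β := by linarith
        rw [← add_div, hγdef, le_div_iff₀ h1β, add_mul,
          div_mul_cancel₀ _ h1β.ne']
        nlinarith

lemma le_dirMax {n : ℕ} (j : Fin n) (f : (Fin n → ℝ) → ℝ≥0∞) (x : Fin n → ℝ)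
    {s t : ℝ} (hs : s < x j) (ht : x j < t) :
    (∫⁻ u in Set.Ioo s t, f (Function.update x j u)) / ENNReal.ofReal (t - s)
      ≤ dirMax j f x := by
  unfold dirMax
  refine le_iSup_of_le s (le_iSup_of_le t ?_)
  rw [iSup_pos hs, iSup_pos ht]

lemma measurable_updateFun {n : ℕ} (j : Fin n) :
    Measurable (fun p : (Fin n → ℝ) × ℝ => Function.update p.1 j p.2) := by
  apply measurable_pi_iff.mpr
  intro k
  by_cases h : k = j
  · subst h
    simp only [Function.update_apply, if_pos rfl]
    exact measurable_snd
  · simp only [Function.update_apply, if_neg h]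
    exact (measurable_pi_apply k).comp measurable_fst

lemma dirMax_eq_ratSup {n : ℕ} (j : Fin n) (f : (Fin n → ℝ) → ℝ≥0∞) (x : Fin n → ℝ) :
    dirMax j f x = ⨆ (q : ℚ) (r : ℚ) (_ : (q:ℝ) < x j) (_ : x j < (r:ℝ)),
      (∫⁻ u in Set.Ioo (q:ℝ) (r:ℝ), f (Function.update x j u))
        / ENNReal.ofReal ((r:ℝ) - (q:ℝ)) := by
  apply le_antisymm
  · refine iSup_le fun s => iSup_le fun t => iSup_le fun hs => iSup_le fun ht => ?_
    refine le_of_forall_lt fun c hc => ?_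
    set N := ∫⁻ u in Set.Ioo s t, f (Function.update x j u) with hN
    have hts : (0:ℝ) < t - s := by linarith
    have hden0 : ENNReal.ofReal (t - s) ≠ 0 := by
      simp only [ne_eq, ENNReal.ofReal_eq_zero, not_le]; linarith
    have hmul : c * ENNReal.ofReal (t - s) < N :=
      (ENNReal.lt_div_iff_mul_lt (Or.inl hden0) (Or.inl ENNReal.ofReal_ne_top)).mp hc
    have hcne : c ≠ ⊤ := hc.ne_top
    have key : ∀ q r : ℚ, (q:ℝ) < x j → x j < (r:ℝ) → ((q:ℝ) ≤ s) → (t ≤ (r:ℝ)) →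
        c * ENNReal.ofReal ((r:ℝ) - (q:ℝ)) < N →
        c < ⨆ (q : ℚ) (r : ℚ) (_ : (q:ℝ) < x j) (_ : x j < (r:ℝ)),
          (∫⁻ u in Set.Ioo (q:ℝ) (r:ℝ), f (Function.update x j u))
            / ENNReal.ofReal ((r:ℝ) - (q:ℝ)) := by
      intro q r hq hr hqs htr hlt
      have hsub : Set.Ioo s t ⊆ Set.Ioo (q:ℝ) (r:ℝ) := Set.Ioo_subset_Ioo hqs htr
      have hNq : N ≤ ∫⁻ u in Set.Ioo (q:ℝ) (r:ℝ), f (Function.update x j u) :=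
        lintegral_mono_set hsub
      have hlt2 : c < (∫⁻ u in Set.Ioo (q:ℝ) (r:ℝ), f (Function.update x j u))
          / ENNReal.ofReal ((r:ℝ) - (q:ℝ)) := by
        rw [ENNReal.lt_div_iff_mul_lt (Or.inl (by
          simp only [ne_eq, ENNReal.ofReal_eq_zero, not_le]
          have := hq.trans hr; linarith)) (Or.inl ENNReal.ofReal_ne_top)]
        exact lt_of_lt_of_le hlt hNq
      refine hlt2.trans_le ?_
      refine le_iSup_of_le q (le_iSup_of_le r ?_)
      rw [iSup_pos hq, iSup_pos hr]
    rcases eq_or_ne N ⊤ with hNt | hNt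
    · obtain ⟨q, hq1, hq2⟩ := exists_rat_btwn (show s - 1 < s by linarith)
      obtain ⟨r, hr1, hr2⟩ := exists_rat_btwn (show t < t + 1 by linarith)
      refine key q r (hq2.trans hs) (ht.trans hr1) hq2.le hr1.le ?_
      rw [hNt]
      exact (ENNReal.mul_ne_top hcne ENNReal.ofReal_ne_top).lt_top
    · -- finite case
      set cR := c.toReal with hcR
      have hcRnn : 0 ≤ cR := ENNReal.toReal_nonneg
      have hreal : cR * (t - s) < N.toReal := by
        have h1 : (c * ENNReal.ofReal (t - s)).toReal = cR * (t - s) := by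
          rw [ENNReal.toReal_mul, ENNReal.toReal_ofReal hts.le]
        rw [← h1]
        exact ENNReal.toReal_strict_mono hNt hmul
      obtain ⟨δ, hδ0, hδ⟩ : ∃ δ : ℝ, 0 < δ ∧ cR * (t - s + 2 * δ) < N.toReal := by
        rcases eq_or_lt_of_le hcRnn with h0 | h0
        · exact ⟨1, one_pos, by rw [← h0]; simpa using (by nlinarith : (0:ℝ) < N.toReal)⟩
        · refine ⟨(N.toReal - cR * (t - s)) / (4 * cR), div_pos (by linarith) (by positivity), ?_⟩
          have h4 : cR * ((N.toReal - cR * (t - s)) / (4 * cR))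
              = (N.toReal - cR * (t - s)) / 4 := by field_simp
          nlinarith [h4]
      obtain ⟨q, hq1, hq2⟩ := exists_rat_btwn (show s - δ < s by linarith)
      obtain ⟨r, hr1, hr2⟩ := exists_rat_btwn (show t < t + δ by linarith)
      refine key q r (hq2.trans hs) (ht.trans hr1) hq2.le hr1.le ?_
      have hNpos : 0 < N.toReal := lt_of_le_of_lt (by positivity) hreal
      calc c * ENNReal.ofReal ((r:ℝ) - (q:ℝ))
          = ENNReal.ofReal (cR * ((r:ℝ) - (q:ℝ))) := by
            rw [ENNReal.ofReal_mul hcRnn, ENNReal.ofReal_toReal hcne]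
        _ < ENNReal.ofReal N.toReal := by
            rw [ENNReal.ofReal_lt_ofReal_iff hNpos]
            have : (r:ℝ) - (q:ℝ) ≤ t - s + 2 * δ := by linarith
            calc cR * ((r:ℝ) - (q:ℝ)) ≤ cR * (t - s + 2 * δ) :=
                  mul_le_mul_of_nonneg_left this hcRnn
              _ < N.toReal := hδ
        _ = N := ENNReal.ofReal_toReal hNt
  · refine iSup_le fun q => iSup_le fun r => iSup_le fun hq => iSup_le fun hr => ?_
    exact le_dirMax j f x hq hr

lemma dirMax_measurable {n : ℕ} (j : Fin n) {f : (Fin n → ℝ) → ℝ≥0∞}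
    (hf : Measurable f) : Measurable (dirMax j f) := by
  have hval : ∀ s t : ℝ, Measurable (fun x : Fin n → ℝ =>
      (∫⁻ u in Set.Ioo s t, f (Function.update x j u)) / ENNReal.ofReal (t - s)) := by
    intro s t
    apply Measurable.div_const
    exact Measurable.lintegral_prod_right'
      (f := fun p : (Fin n → ℝ) × ℝ => f (Function.update p.1 j p.2))
      (hf.comp (measurable_updateFun j))
  have heq : dirMax j f = fun x => ⨆ (q : ℚ) (r : ℚ),
      ({x : Fin n → ℝ | (q:ℝ) < x j ∧ x j < (r:ℝ)}.indicator
        (fun x => (∫⁻ u in Set.Ioo (q:ℝ) (r:ℝ), f (Function.update x j u))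
          / ENNReal.ofReal ((r:ℝ) - (q:ℝ))) x) := by
    funext x
    rw [dirMax_eq_ratSup]
    congr 1
    funext q
    congr 1
    funext r
    rw [Set.indicator_apply]
    by_cases h : x ∈ {x : Fin n → ℝ | (q:ℝ) < x j ∧ x j < (r:ℝ)}
    · rw [if_pos h, iSup_pos h.1, iSup_pos h.2]
    · rw [if_neg h]
      rcases not_and_or.mp h with h1 | h1
      · rw [iSup_neg h1]
        simp
      · rw [iSup_comm, iSup_neg h1]
        simp
  rw [heq]
  refine Measurable.iSup fun q => Measurable.iSup fun r => Measurable.indicator (hval _ _) ?_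
  have : {x : Fin n → ℝ | (q:ℝ) < x j ∧ x j < (r:ℝ)}
      = (fun x : Fin n → ℝ => x j) ⁻¹' (Set.Ioo (q:ℝ) (r:ℝ)) := rfl
  rw [this]
  exact (measurable_pi_apply j) measurableSet_Ioo

lemma dirMax_le_one {n : ℕ} (j : Fin n) {f : (Fin n → ℝ) → ℝ≥0∞}
    (hb : ∀ y, f y ≤ 1) (x : Fin n → ℝ) : dirMax j f x ≤ 1 := by
  refine iSup_le fun s => iSup_le fun t => iSup_le fun hs => iSup_le fun ht => ?_
  apply ENNReal.div_le_of_le_mul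
  rw [one_mul]
  calc (∫⁻ u in Set.Ioo s t, f (Function.update x j u))
      ≤ ∫⁻ _ in Set.Ioo s t, 1 := lintegral_mono fun u => hb _
    _ = volume (Set.Ioo s t) := setLIntegral_one _
    _ = ENNReal.ofReal (t - s) := Real.volume_Ioo

lemma dirMax_indicator_eq {n : ℕ} (j : Fin n) {B : Set (Fin n → ℝ)}
    (hB : MeasurableSet B) (x : Fin n → ℝ) :
    dirMax j (B.indicator 1) x = ⨆ (s : ℝ) (t : ℝ) (_ : s < x j) (_ : x j < t),
      volume ({u : ℝ | Function.update x j u ∈ B} ∩ Set.Ioo s t)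
        / ENNReal.ofReal (t - s) := by
  have hAx : MeasurableSet {u : ℝ | Function.update x j u ∈ B} := by
    have hm : Measurable fun u : ℝ => Function.update x j u :=
      (measurable_updateFun j).comp (measurable_const.prodMk measurable_id)
    exact hm hB
  unfold dirMax
  congr 1; funext s; congr 1; funext t
  have hpt : ∀ u : ℝ, B.indicator (1 : (Fin n → ℝ) → ℝ≥0∞) (Function.update x j u)
      = {u : ℝ | Function.update x j u ∈ B}.indicator (1 : ℝ → ℝ≥0∞) u := by
    intro u
    by_cases h : Function.update x j u ∈ B
    · rw [Set.indicator_of_mem h,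
        Set.indicator_of_mem (show u ∈ {u : ℝ | Function.update x j u ∈ B} from h)]
      rfl
    · rw [Set.indicator_of_notMem h,
        Set.indicator_of_notMem (show u ∉ {u : ℝ | Function.update x j u ∈ B} from h)]
  have hnum : (∫⁻ u in Set.Ioo s t, B.indicator 1 (Function.update x j u))
      = volume ({u : ℝ | Function.update x j u ∈ B} ∩ Set.Ioo s t) := by
    calc (∫⁻ u in Set.Ioo s t, B.indicator 1 (Function.update x j u))
        = ∫⁻ u in Set.Ioo s t, {u : ℝ | Function.update x j u ∈ B}.indicator 1 u :=
          lintegral_congr fun u => hpt u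
      _ = volume ({u : ℝ | Function.update x j u ∈ B} ∩ Set.Ioo s t) := by
          rw [lintegral_indicator_one hAx, Measure.restrict_apply hAx]
  rw [hnum]


lemma sliceBound {n : ℕ} (j : Fin n) {B : Set (Fin n → ℝ)} (hB : MeasurableSet B)
    {β : ℝ} (hβ0 : 0 < β) (hβ1 : β < 1) :
    volume {x | ENNReal.ofReal (1 - β) < dirMax j (B.indicator 1) x}
      ≤ ENNReal.ofReal ((1 + 3 * β) / (1 - β)) * volume B := by
  induction n with
  | zero => exact j.elim0
  | succ m _ =>
    set e := MeasurableEquiv.piFinSuccAbove (fun _ : Fin (m+1) => ℝ) j with he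
    have hmp : MeasurePreserving e (volume : Measure (Fin (m+1) → ℝ))
        ((volume : Measure ℝ).prod (volume : Measure (Fin m → ℝ))) := by
      exact measurePreserving_piFinSuccAbove (fun _ : Fin (m+1) => (volume : Measure ℝ)) j
    have hSm : MeasurableSet {x : Fin (m+1) → ℝ |
        ENNReal.ofReal (1 - β) < dirMax j (B.indicator 1) x} :=
      measurableSet_lt measurable_const
        (dirMax_measurable j (measurable_one.indicator hB))
    set S := {x : Fin (m+1) → ℝ | ENNReal.ofReal (1 - β) < dirMax j (B.indicator 1) x}
      with hS
    -- slice sets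
    set Ay : (Fin m → ℝ) → Set ℝ := fun y => {v : ℝ | Fin.insertNth (α := fun _ => ℝ) j v y ∈ B} with hAy
    have hAym : ∀ y, MeasurableSet (Ay y) := by
      intro y
      have hm : Measurable fun v : ℝ => Fin.insertNth (α := fun _ => ℝ) j v y := by
        have : (fun v : ℝ => Fin.insertNth (α := fun _ => ℝ) j v y) = fun v => e.symm (v, y) := by
          funext v
          simp [he, MeasurableEquiv.piFinSuccAbove, Fin.insertNthEquiv]
        rw [this]
        exact e.symm.measurable.comp (measurable_id.prodMk measurable_const)
      exact hm hB
    have hesymm : ∀ (u : ℝ) (y : Fin m → ℝ), e.symm (u, y) = Fin.insertNth (α := fun _ => ℝ) j u y := by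
      intro u y
      simp [he, MeasurableEquiv.piFinSuccAbove, Fin.insertNthEquiv]
    have hslice : ∀ (u : ℝ) (y : Fin m → ℝ),
        dirMax j (B.indicator 1) (Fin.insertNth (α := fun _ => ℝ) j u y)
          = ⨆ (s : ℝ) (t : ℝ) (_ : s < u) (_ : u < t),
              volume (Ay y ∩ Set.Ioo s t) / ENNReal.ofReal (t - s) := by
      intro u y
      rw [dirMax_indicator_eq j hB]
      simp only [Fin.insertNth_apply_same, Fin.update_insertNth]
      rfl
    -- volume S via Fubini
    have hvolS : volume S = ∫⁻ y : Fin m → ℝ,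
        volume {u : ℝ | ENNReal.ofReal (1 - β) <
          ⨆ (s : ℝ) (t : ℝ) (_ : s < u) (_ : u < t),
            volume (Ay y ∩ Set.Ioo s t) / ENNReal.ofReal (t - s)} := by
      have h1 : S = e ⁻¹' (e.symm ⁻¹' S) := by
        ext z; simp
      rw [h1, hmp.measure_preimage_equiv]
      rw [Measure.prod_apply_symm (hSm.preimage e.symm.measurable)]
      congr 1
      funext y
      congr 1
      ext u
      simp only [mem_preimage, hS, mem_setOf_eq]
      rw [hesymm u y, hslice u y]
    have hvolB : volume B = ∫⁻ y : Fin m → ℝ, volume (Ay y) := by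
      have h1 : B = e ⁻¹' (e.symm ⁻¹' B) := by
        ext z; simp
      conv_lhs => rw [h1]
      rw [hmp.measure_preimage_equiv]
      rw [Measure.prod_apply_symm (hB.preimage e.symm.measurable)]
      congr 1
    rw [hvolS, hvolB, ← lintegral_const_mul' _ _ ENNReal.ofReal_ne_top]
    exact lintegral_mono fun y => oneDim (Ay y) (hAym y) hβ0 hβ1

lemma densityStep {n : ℕ} (j : Fin n) {g : (Fin n → ℝ) → ℝ≥0∞} (hg : Measurable g)
    (hg1 : ∀ y, g y ≤ 1) {β ε : ℝ} (hβ0 : 0 < β) (hβ1 : β < 1) (hε0 : 0 < ε)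
    (hε1 : ε ≤ 1) :
    {x | ENNReal.ofReal (1 - β * ε) < dirMax j g x}
      ⊆ {x | ENNReal.ofReal (1 - β) <
          dirMax j ({y | ENNReal.ofReal (1 - ε) < g y}.indicator 1) x} := by
  intro x hx
  simp only [mem_setOf_eq] at hx ⊢
  set B : Set (Fin n → ℝ) := {y | ENNReal.ofReal (1 - ε) < g y} with hBdef
  have hBm : MeasurableSet B := measurableSet_lt measurable_const hg
  have hAx : MeasurableSet {u : ℝ | Function.update x j u ∈ B} := by
    have hm : Measurable fun u : ℝ => Function.update x j u :=
      (measurable_updateFun j).comp (measurable_const.prodMk measurable_id)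
    exact hm hBm
  simp only [dirMax, lt_iSup_iff] at hx
  obtain ⟨s, t, hs, ht, hval⟩ := hx
  have hts : (0 : ℝ) < t - s := by linarith
  have hden0 : ENNReal.ofReal (t - s) ≠ 0 := by
    simp only [ne_eq, ENNReal.ofReal_eq_zero, not_le]; linarith
  have hmul : ENNReal.ofReal (1 - β * ε) * ENNReal.ofReal (t - s)
      < ∫⁻ u in Set.Ioo s t, g (Function.update x j u) :=
    (ENNReal.lt_div_iff_mul_lt (Or.inl hden0) (Or.inl ENNReal.ofReal_ne_top)).mp hval
  -- pointwise bound
  have hpt : ∀ u : ℝ, g (Function.update x j u)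
      ≤ ENNReal.ofReal (1 - ε)
        + {u : ℝ | Function.update x j u ∈ B}.indicator (fun _ => ENNReal.ofReal ε) u := by
    intro u
    by_cases h : Function.update x j u ∈ B
    · rw [Set.indicator_of_mem (show u ∈ {u : ℝ | Function.update x j u ∈ B} from h)]
      rw [← ENNReal.ofReal_add (by linarith) hε0.le]
      have : (1 - ε) + ε = 1 := by ring
      rw [this, ENNReal.ofReal_one]
      exact hg1 _
    · rw [Set.indicator_of_notMem (show u ∉ {u : ℝ | Function.update x j u ∈ B} from h)]
      rw [add_zero]
      exact not_lt.mp h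
  have hint : (∫⁻ u in Set.Ioo s t, g (Function.update x j u))
      ≤ ENNReal.ofReal (1 - ε) * ENNReal.ofReal (t - s)
        + ENNReal.ofReal ε * volume ({u : ℝ | Function.update x j u ∈ B} ∩ Set.Ioo s t) := by
    calc (∫⁻ u in Set.Ioo s t, g (Function.update x j u))
        ≤ ∫⁻ u in Set.Ioo s t, (ENNReal.ofReal (1 - ε)
            + {u : ℝ | Function.update x j u ∈ B}.indicator (fun _ => ENNReal.ofReal ε) u) :=
          lintegral_mono fun u => hpt u
      _ = ENNReal.ofReal (1 - ε) * ENNReal.ofReal (t - s)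
            + ENNReal.ofReal ε * volume ({u : ℝ | Function.update x j u ∈ B} ∩ Set.Ioo s t) := by
          rw [lintegral_add_right _ ((measurable_const).indicator hAx),
            setLIntegral_const, Real.volume_Ioo, lintegral_indicator hAx,
            setLIntegral_const, Measure.restrict_apply hAx]
  -- conclude: density of B in (s,t) exceeds 1 - β
  have hsplit : ENNReal.ofReal (1 - β * ε) = ENNReal.ofReal (1 - ε) + ENNReal.ofReal (ε * (1 - β)) := by
    rw [← ENNReal.ofReal_add (by linarith) (by nlinarith)]
    congr 1
    ring
  have hkey : ENNReal.ofReal ε * (ENNReal.ofReal (1 - β) * ENNReal.ofReal (t - s))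
      < ENNReal.ofReal ε * volume ({u : ℝ | Function.update x j u ∈ B} ∩ Set.Ioo s t) := by
    have h1 : ENNReal.ofReal (1 - ε) * ENNReal.ofReal (t - s)
        + ENNReal.ofReal (ε * (1 - β)) * ENNReal.ofReal (t - s)
        < ENNReal.ofReal (1 - ε) * ENNReal.ofReal (t - s)
          + ENNReal.ofReal ε * volume ({u : ℝ | Function.update x j u ∈ B} ∩ Set.Ioo s t) := by
      rw [← add_mul, ← hsplit]
      exact lt_of_lt_of_le hmul hint
    have h2 := (ENNReal.add_lt_add_iff_left
      (ENNReal.mul_ne_top ENNReal.ofReal_ne_top ENNReal.ofReal_ne_top)).mp h1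
    calc ENNReal.ofReal ε * (ENNReal.ofReal (1 - β) * ENNReal.ofReal (t - s))
        = ENNReal.ofReal (ε * (1 - β)) * ENNReal.ofReal (t - s) := by
          rw [ENNReal.ofReal_mul hε0.le, mul_assoc]
      _ < _ := h2
  have hdens : ENNReal.ofReal (1 - β) * ENNReal.ofReal (t - s)
      < volume ({u : ℝ | Function.update x j u ∈ B} ∩ Set.Ioo s t) :=
    (ENNReal.mul_lt_mul_iff_right (by simp only [ne_eq, ENNReal.ofReal_eq_zero, not_le]; linarith)
      ENNReal.ofReal_ne_top).mp hkey
  rw [dirMax_indicator_eq j hBm]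
  have : ENNReal.ofReal (1 - β)
      < volume ({u : ℝ | Function.update x j u ∈ B} ∩ Set.Ioo s t) / ENNReal.ofReal (t - s) :=
    (ENNReal.lt_div_iff_mul_lt (Or.inl hden0) (Or.inl ENNReal.ofReal_ne_top)).mpr hdens
  refine this.trans_le ?_
  refine le_iSup_of_le s (le_iSup_of_le t ?_)
  rw [iSup_pos hs, iSup_pos ht]


lemma foldr_measurable {n : ℕ} (L : List (Fin n)) {f : (Fin n → ℝ) → ℝ≥0∞}
    (hf : Measurable f) : Measurable (L.foldr (fun j g => dirMax j g) f) := by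
  induction L with
  | nil => exact hf
  | cons j L ih => exact dirMax_measurable j ih

lemma foldr_le_one {n : ℕ} (L : List (Fin n)) {f : (Fin n → ℝ) → ℝ≥0∞}
    (hf : ∀ y, f y ≤ 1) : ∀ x, L.foldr (fun j g => dirMax j g) f x ≤ 1 := by
  induction L with
  | nil => exact hf
  | cons j L ih => exact fun x => dirMax_le_one j ih x

lemma keyLemma {n : ℕ} {β : ℝ} (hβ0 : 0 < β) (hβ1 : β < 1) :
    ∀ (L : List (Fin n)) (B : Set (Fin n → ℝ)), MeasurableSet B →
    volume {x | ENNReal.ofReal (1 - β ^ L.length)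
        < L.foldr (fun j g => dirMax j g) (B.indicator 1) x}
      ≤ ENNReal.ofReal (((1 + 3 * β) / (1 - β)) ^ L.length) * volume B := by
  intro L
  induction L with
  | nil =>
    intro B hB
    simp only [List.length_nil, pow_zero, List.foldr_nil]
    have hset : {x | ENNReal.ofReal (1 - 1) < B.indicator (1 : (Fin n → ℝ) → ℝ≥0∞) x} = B := by
      ext y
      simp only [mem_setOf_eq, sub_self, ENNReal.ofReal_zero]
      constructor
      · intro h
        by_contra hy
        rw [Set.indicator_of_notMem hy] at h
        exact lt_irrefl 0 h
      · intro hy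
        rw [Set.indicator_of_mem hy]
        exact zero_lt_one
    rw [hset, ENNReal.ofReal_one, one_mul]
  | cons j L ih =>
    intro B hB
    have hind1 : ∀ y, B.indicator (1 : (Fin n → ℝ) → ℝ≥0∞) y ≤ 1 := by
      intro y
      by_cases h : y ∈ B
      · simp [Set.indicator_of_mem h]
      · simp [Set.indicator_of_notMem h]
    set g := L.foldr (fun j g => dirMax j g) (B.indicator 1) with hgdef
    have hgm : Measurable g := foldr_measurable L (measurable_one.indicator hB)
    have hg1 : ∀ y, g y ≤ 1 := foldr_le_one L hind1
    set ε := β ^ L.length with hεdef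
    have hε0 : 0 < ε := pow_pos hβ0 _
    have hε1 : ε ≤ 1 := pow_le_one₀ hβ0.le hβ1.le
    set B' : Set (Fin n → ℝ) := {y | ENNReal.ofReal (1 - ε) < g y} with hB'def
    have hB'm : MeasurableSet B' := measurableSet_lt measurable_const hgm
    have hlen : (1 : ℝ) - β ^ (j :: L).length = 1 - β * ε := by
      rw [List.length_cons, hεdef, pow_succ]
      ring
    have hsub : {x | ENNReal.ofReal (1 - β ^ (j :: L).length)
        < (j :: L).foldr (fun j g => dirMax j g) (B.indicator 1) x}
        ⊆ {x | ENNReal.ofReal (1 - β) < dirMax j (B'.indicator 1) x} := by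
      rw [hlen]
      exact densityStep j hgm hg1 hβ0 hβ1 hε0 hε1
    have hcnn : (0:ℝ) ≤ (1 + 3 * β) / (1 - β) :=
      div_nonneg (by linarith) (by linarith)
    calc volume {x | ENNReal.ofReal (1 - β ^ (j :: L).length)
          < (j :: L).foldr (fun j g => dirMax j g) (B.indicator 1) x}
        ≤ volume {x | ENNReal.ofReal (1 - β) < dirMax j (B'.indicator 1) x} :=
          measure_mono hsub
      _ ≤ ENNReal.ofReal ((1 + 3 * β) / (1 - β)) * volume B' := sliceBound j hB'm hβ0 hβ1
      _ ≤ ENNReal.ofReal ((1 + 3 * β) / (1 - β))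
            * (ENNReal.ofReal (((1 + 3 * β) / (1 - β)) ^ L.length) * volume B) :=
          mul_le_mul_right (ih B hB) _
      _ = ENNReal.ofReal (((1 + 3 * β) / (1 - β)) ^ (j :: L).length) * volume B := by
          rw [← mul_assoc, ← ENNReal.ofReal_mul hcnn, List.length_cons, pow_succ]
          ring_nf

theorem iterated_solyanik (n : ℕ) (hn : 1 ≤ n) (α : ℝ) (hα0 : 0 < α) (hα1 : α < 1)
    (E : Set (Fin n → ℝ)) (hE : MeasurableSet E) :
    volume {x : Fin n → ℝ | iterMax n (E.indicator 1) x > ENNReal.ofReal α}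
      ≤ ENNReal.ofReal
          ((1 + 4 * (1 - α) ^ ((n : ℝ)⁻¹) / (1 - (1 - α) ^ ((n : ℝ)⁻¹))) ^ n)
        * volume E := by
  have hn0 : (0:ℝ) < n := by exact_mod_cast hn
  have h1α : (0:ℝ) < 1 - α := by linarith
  set β := (1 - α) ^ ((n : ℝ)⁻¹) with hβdef
  have hβ0 : 0 < β := Real.rpow_pos_of_pos h1α _
  have hβ1 : β < 1 := Real.rpow_lt_one h1α.le (by linarith) (by positivity)
  have hβn : β ^ n = 1 - α := by
    rw [hβdef, ← Real.rpow_natCast ((1 - α) ^ ((n : ℝ)⁻¹)) n,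
      ← Real.rpow_mul h1α.le, inv_mul_cancel₀ hn0.ne', Real.rpow_one]
  have hkey := keyLemma hβ0 hβ1 (List.finRange n) E hE
  rw [List.length_finRange] at hkey
  have h1 : (1 : ℝ) - β ^ n = α := by rw [hβn]; ring
  have h2 : (1 + 3 * β) / (1 - β) = 1 + 4 * β / (1 - β) := by
    have hne : (1:ℝ) - β ≠ 0 := by linarith
    field_simp
    ring
  have hgoal : volume {x : Fin n → ℝ | iterMax n (E.indicator 1) x > ENNReal.ofReal α}
      = volume {x | ENNReal.ofReal (1 - β ^ n)
          < (List.finRange n).foldr (fun j g => dirMax j g) (E.indicator 1) x} := by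
    rw [h1]
    rfl
  rw [hgoal]
  refine hkey.trans (le_of_eq ?_)
  rw [← h2]
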